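/- Let u₀, v₀: ℝ² → ℝ be the unique functions such that for each (x,y), (u,v) = (u₀(x,y), v₀(x,y)) satisfies v² + y² = (x²+u²)², vu + yx = 0, vx − yu ≥ 0. Then u₀(0,y) = −y|y|^{−1/2} for y ≠ 0 (equivalently u₀(0,y)⁴ = y² with sign opposite to y), and v₀(x,0) = x|x| for all x. -/
import Mathlib


theorem harvey_lawson_values (u₀ v₀ : ℝ → ℝ → ℝ)
    (hsys : ∀ x y : ℝ,
      (v₀ x y) ^ 2 + y ^ 2 = (x ^ 2 + (u₀ x y) ^ 2) ^ 2 ∧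
      v₀ x y * u₀ x y + y * x = 0 ∧
      v₀ x y * x - y * u₀ x y ≥ 0) :
    (∀ y : ℝ, y ≠ 0 → u₀ 0 y = -y * |y| ^ (-(1 : ℝ) / 2)) ∧
    (∀ x : ℝ, v₀ x 0 = x * |x|) := by
  constructor
  · intro y hy
    obtain ⟨h1, h2, h3⟩ := hsys 0 y
    set u := u₀ 0 y with hu
    set v := v₀ 0 y with hv
    simp only [mul_zero, add_zero, zero_pow, ne_eq, OfNat.ofNat_ne_zero,
      not_false_eq_true, zero_add, zero_mul, zero_sub, pow_two] at h1 h2 h3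
    -- h2 : v * u = 0
    have hv0 : v = 0 := by
      rcases mul_eq_zero.mp h2 with h | h
      · exact h
      · exfalso
        rw [h] at h1
        have : y ^ 2 = 0 := by nlinarith
        exact hy (by nlinarith)
    rw [hv0] at h1
    have habs : |y| ^ (-(1 : ℝ) / 2) = (Real.sqrt |y|)⁻¹ := by
      rw [show (-(1:ℝ)/2) = -(1/2) by ring, Real.rpow_neg (abs_nonneg y),
        Real.sqrt_eq_rpow]
    have hyabs : (0:ℝ) < |y| := abs_pos.mpr hy
    have hs : (0:ℝ) < Real.sqrt |y| := Real.sqrt_pos.mpr hyabs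
    set s := Real.sqrt |y| with hsdef
    have hs2 : s ^ 2 = |y| := Real.sq_sqrt (abs_nonneg y)
    rw [habs]
    -- target: u = -y * s⁻¹
    have hy2 : y ^ 2 = |y| ^ 2 := (sq_abs y).symm
    have hu2 : u ^ 2 = |y| := by nlinarith [sq_nonneg u, sq_nonneg (u^2 - |y|), sq_nonneg (u^2 + |y|)]
    have ht2 : (-y * s⁻¹) ^ 2 = |y| := by
      field_simp
      nlinarith
    have hfac : (u - (-y * s⁻¹)) * (u + (-y * s⁻¹)) = 0 := by nlinarith
    rcases mul_eq_zero.mp hfac with h | h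
    · linarith
    · exfalso
      have hu' : u = y * s⁻¹ := by linarith
      have : -(y * u) ≥ 0 := h3
      rw [hu'] at this
      have : y * (y * s⁻¹) > 0 := by
        have : y ^ 2 * s⁻¹ > 0 := by positivity
        nlinarith
      linarith
  · intro x
    obtain ⟨h1, h2, h3⟩ := hsys x 0
    set u := u₀ x 0 with hu
    set v := v₀ x 0 with hv
    simp only [mul_zero, add_zero, zero_mul, zero_pow, sub_zero] at h1 h2 h3
    rcases eq_or_ne x 0 with hx | hx
    · subst hx
      simp only [abs_zero, mul_zero]
      rcases mul_eq_zero.mp h2 with h | h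
      · exact h
      · rw [h] at h1; nlinarith [sq_nonneg v]
    · have hu0 : u = 0 := by
        rcases mul_eq_zero.mp h2 with h | h
        · exfalso
          rw [h] at h1
          have hx2 : x ^ 2 > 0 := by positivity
          nlinarith [sq_nonneg u, sq_nonneg (x^2 + u^2)]
        · exact h
      rw [hu0] at h1
      have hxa : x ^ 2 = x * |x| * (Real.sign x) := by
        rcases lt_or_gt_of_ne hx with h | h
        · rw [Real.sign_of_neg h, abs_of_neg h]; ring
        · rw [Real.sign_of_pos h, abs_of_pos h]; ring
      have h1' : v ^ 2 = (x * |x|) ^ 2 := by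
        rcases lt_or_gt_of_ne hx with h | h
        · rw [abs_of_neg h]; nlinarith
        · rw [abs_of_pos h]; nlinarith
      have hfac : (v - x * |x|) * (v + x * |x|) = 0 := by nlinarith
      rcases mul_eq_zero.mp hfac with h | h
      · linarith
      · exfalso
        have hv' : v = -(x * |x|) := by linarith
        rw [hv'] at h3
        have : x ^ 2 * |x| > 0 := by positivity
        nlinarith
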